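/- Let k have characteristic different from 2, let n = 2m + 1 with m ≥ 1, let α ∈ L be such that the symmetric bilinear form w(x, y) := θ*_{n−1}(α·x·y) on L is nondegenerate, and let M ⊆ L be an m-dimensional k-subspace with θ*_{n−1}(α·u·v) = 0 and θ*_{n−1}(α·θ·u·v) = 0 for all u, v ∈ M. If ℓ ∈ M satisfies ℓ ≠ 0 and ℓ·θ^i ∈ M for all 0 ≤ i ≤ m − 1, then: ℓ is a unit of L; the elements ℓ, ℓ·θ, …, ℓ·θ^{m−1} form a k-basis of M; and there exists a nonzero a ∈ k with α·ℓ² = a. -/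

import Mathlib

theorem stmt_14 (k : Type*) [Field k] (hchar : ringChar k ≠ 2)
    (f : Polynomial k) (hf : f.Monic) (hsep : f.Separable)
    (m : ℕ) (hm : 1 ≤ m) (hdeg : f.natDegree = 2 * m + 1)
    (coeffTop : AdjoinRoot f →ₗ[k] k)
    (hct1 : coeffTop (AdjoinRoot.root f ^ (f.natDegree - 1)) = 1)
    (hct0 : ∀ i : ℕ, i < f.natDegree - 1 → coeffTop (AdjoinRoot.root f ^ i) = 0)
    (α : AdjoinRoot f)
    (hnd : ∀ x : AdjoinRoot f, (∀ y : AdjoinRoot f, coeffTop (α * x * y) = 0) → x = 0)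
    (M : Submodule k (AdjoinRoot f)) (hMdim : Module.finrank k M = m)
    (hiso : ∀ u ∈ M, ∀ v ∈ M, coeffTop (α * u * v) = 0)
    (hiso' : ∀ u ∈ M, ∀ v ∈ M, coeffTop (α * AdjoinRoot.root f * u * v) = 0)
    (ℓ : AdjoinRoot f) (hℓM : ℓ ∈ M) (hℓ0 : ℓ ≠ 0)
    (hℓpow : ∀ i : ℕ, i ≤ m - 1 → ℓ * AdjoinRoot.root f ^ i ∈ M) :
    IsUnit ℓ ∧
    (LinearIndependent k (fun i : Fin m => ℓ * AdjoinRoot.root f ^ (i : ℕ)) ∧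
      Submodule.span k (Set.range fun i : Fin m => ℓ * AdjoinRoot.root f ^ (i : ℕ)) = M) ∧
    ∃ a : k, a ≠ 0 ∧ α * ℓ ^ 2 = algebraMap k (AdjoinRoot f) a := by
  have hf0 : f ≠ 0 := hf.ne_zero
  set θ := AdjoinRoot.root f with hθ
  set n := f.natDegree with hn
  have hn3 : 3 ≤ n := by omega
  let pb := AdjoinRoot.powerBasis hf0
  have hpbdim : pb.dim = n := rfl
  have hpb : ∀ i : Fin pb.dim, pb.basis i = θ ^ (i : ℕ) := fun i => pb.basis_eq_pow i
  haveI : FiniteDimensional k (AdjoinRoot f) := Module.Finite.of_basis pb.basis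
  -- Step 1 : anything orthogonal to θ^s for all s ≤ n-2 is a scalar
  have const : ∀ β : AdjoinRoot f, (∀ s : ℕ, s ≤ n - 2 → coeffTop (β * θ ^ s) = 0) →
      ∃ a : k, β = algebraMap k (AdjoinRoot f) a := by
    intro β hβ
    set c := pb.basis.repr β with hc
    have hrepr : β = ∑ i : Fin pb.dim, c i • θ ^ (i : ℕ) := by
      conv_lhs => rw [← pb.basis.sum_repr β]
      exact Finset.sum_congr rfl fun i _ => by rw [hpb]
    have hsum : ∀ s : ℕ, coeffTop (β * θ ^ s) =
        ∑ i : Fin pb.dim, c i * coeffTop (θ ^ ((i : ℕ) + s)) := by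
      intro s
      rw [hrepr, Finset.sum_mul, map_sum]
      exact Finset.sum_congr rfl fun i _ => by
        rw [smul_mul_assoc, map_smul, smul_eq_mul, pow_add]
    have key : ∀ d : ℕ, d ≤ n - 2 → c ⟨n - 1 - d, by omega⟩ = 0 := by
      intro d
      induction d using Nat.strong_induction_on with
      | _ d ih =>
        intro hd
        have h0 := hβ d hd
        rw [hsum d] at h0
        rw [Finset.sum_eq_single (⟨n - 1 - d, by omega⟩ : Fin pb.dim)] at h0
        · rw [show (⟨n - 1 - d, by omega⟩ : Fin pb.dim).val + d = n - 1 by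
            simp; omega] at h0
          rw [hct1] at h0
          simpa using h0
        · intro i _ hi
          rcases lt_or_gt_of_ne (fun h : (i : ℕ) = n - 1 - d => hi (Fin.ext h)) with h | h
          · rw [hct0 ((i : ℕ) + d) (by omega), mul_zero]
          · have hci : c i = 0 := by
              have : (i : ℕ) = n - 1 - (n - 1 - (i : ℕ)) := by omega
              have := ih (n - 1 - (i : ℕ)) (by omega) (by omega)
              convert this using 2
              exact Fin.ext (by simp; omega)
            rw [hci, zero_mul]
        · intro h; exact absurd (Finset.mem_univ _) h
    have hcz : ∀ i : Fin pb.dim, (i : ℕ) ≠ 0 → c i = 0 := by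
      intro i hi
      have h1 : (i : ℕ) < n := i.isLt
      have := key (n - 1 - (i : ℕ)) (by omega)
      convert this using 2
      exact Fin.ext (by simp; omega)
    refine ⟨c ⟨0, by omega⟩, ?_⟩
    rw [hrepr, Finset.sum_eq_single (⟨0, by omega⟩ : Fin pb.dim)]
    · exact (Algebra.algebraMap_eq_smul_one _).symm
    · intro i _ hi
      rw [hcz i (fun h => hi (Fin.ext h)), zero_smul]
    · intro h; exact absurd (Finset.mem_univ _) h
  -- Step 2 : α ℓ² is orthogonal to θ^s for all s ≤ n - 2
  have h1 : ∀ i j : ℕ, i ≤ m - 1 → j ≤ m - 1 → coeffTop (α * ℓ ^ 2 * θ ^ (i + j)) = 0 := by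
    intro i j hi hj
    have h := hiso _ (hℓpow i hi) _ (hℓpow j hj)
    rw [show α * (ℓ * θ ^ i) * (ℓ * θ ^ j) = α * ℓ ^ 2 * θ ^ (i + j) by
      rw [pow_add]; ring] at h
    exact h
  have h2 : ∀ i j : ℕ, i ≤ m - 1 → j ≤ m - 1 → coeffTop (α * ℓ ^ 2 * θ ^ (i + j + 1)) = 0 := by
    intro i j hi hj
    have h := hiso' _ (hℓpow i hi) _ (hℓpow j hj)
    rw [show α * θ * (ℓ * θ ^ i) * (ℓ * θ ^ j) = α * ℓ ^ 2 * θ ^ (i + j + 1) by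
      rw [pow_add, pow_add, pow_one]; ring] at h
    exact h
  have hβ : ∀ s : ℕ, s ≤ n - 2 → coeffTop (α * ℓ ^ 2 * θ ^ s) = 0 := by
    intro s hs
    have hs' : s ≤ 2 * m - 1 := by omega
    rcases le_or_gt s (m - 1) with h | h
    · simpa using h1 s 0 h (Nat.zero_le _)
    · rcases le_or_gt s (2 * m - 2) with h' | h'
      · have := h1 (m - 1) (s - (m - 1)) le_rfl (by omega)
        rwa [show m - 1 + (s - (m - 1)) = s by omega] at this
      · have := h2 (m - 1) (m - 1) le_rfl le_rfl
        rwa [show m - 1 + (m - 1) + 1 = s by omega] at this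
  obtain ⟨a, ha⟩ := const (α * ℓ ^ 2) hβ
  -- α is a unit
  have hαz : ∀ x : AdjoinRoot f, α * x = 0 → x = 0 := by
    intro x hx
    exact hnd x fun y => by rw [hx, zero_mul, map_zero]
  have hαinj : Function.Injective (LinearMap.mulLeft k α) := by
    intro x y hxy
    have : α * (x - y) = 0 := by
      simp only [LinearMap.mulLeft_apply] at hxy
      rw [mul_sub, hxy, sub_self]
    exact sub_eq_zero.mp (hαz _ this)
  have hαunit : IsUnit α := by
    obtain ⟨y, hy⟩ := (LinearMap.injective_iff_surjective.mp hαinj) 1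
    exact IsUnit.of_mul_eq_one (a := α) y (by simpa using hy)
  -- a ≠ 0
  have ha0 : a ≠ 0 := by
    intro h
    rw [h, map_zero] at ha
    have hℓ2 : ℓ ^ 2 = 0 := hαz _ ha
    obtain ⟨g, rfl⟩ := AdjoinRoot.mk_surjective ℓ
    have : f ∣ g ^ 2 := by
      rw [← AdjoinRoot.mk_eq_zero, map_pow]; exact hℓ2
    have : f ∣ g := (hsep.squarefree.dvd_pow_iff_dvd two_ne_zero).mp this
    exact hℓ0 (AdjoinRoot.mk_eq_zero.mpr this)
  -- ℓ is a unit
  have hℓunit : IsUnit ℓ := by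
    have hu : IsUnit (α * ℓ ^ 2) := by
      rw [ha]
      exact (isUnit_iff_ne_zero.mpr ha0).map (algebraMap k (AdjoinRoot f))
    have : IsUnit (ℓ ^ 2) := isUnit_of_mul_isUnit_right hu
    exact (isUnit_pow_iff two_ne_zero).mp this
  -- linear independence
  have hmn : m ≤ n := by omega
  have hθind : LinearIndependent k (fun i : Fin m => θ ^ (i : ℕ)) := by
    have hb := pb.basis.linearIndependent
    have hcomp := hb.comp (Fin.castLE (by omega : m ≤ pb.dim))
      (Fin.castLE_injective _)
    convert hcomp using 1
    funext i
    rw [Function.comp_apply, hpb]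
    rfl
    rfl
  have hℓinj : Function.Injective (LinearMap.mulLeft k ℓ) := by
    intro x y hxy
    simp only [LinearMap.mulLeft_apply] at hxy
    exact (IsUnit.mul_right_injective hℓunit) hxy
  have hind : LinearIndependent k (fun i : Fin m => ℓ * θ ^ (i : ℕ)) := by
    have := hθind.map' (LinearMap.mulLeft k ℓ) (LinearMap.ker_eq_bot.mpr hℓinj)
    convert this using 1
    all_goals rfl
  -- span = M
  have hle : Submodule.span k (Set.range fun i : Fin m => ℓ * θ ^ (i : ℕ)) ≤ M := by
    rw [Submodule.span_le]
    rintro x ⟨i, rfl⟩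
    exact hℓpow (i : ℕ) (by omega)
  have hspan : Submodule.span k (Set.range fun i : Fin m => ℓ * θ ^ (i : ℕ)) = M := by
    apply Submodule.eq_of_le_of_finrank_le hle
    rw [hMdim, finrank_span_eq_card hind, Fintype.card_fin]
  exact ⟨hℓunit, ⟨hind, hspan⟩, ⟨a, ha0, ha⟩⟩
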